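/- Let (M,d) be a doubling metric space and Ω ⊊ M open and nonempty. Then there exists a countable family 𝒰 = {U_i} of pairwise disjoint Borel subsets of Ω with ⋃ U_i = Ω, such that for each i there exist x_i ∈ U_i and k_i ∈ ℤ with B(x_i, 8^{−k_i}/16) ⊆ U_i ⊆ B(x_i, 2·8^{−k_i}) and 32·8^{−k_i} ≤ d(U_i, M\Ω) ≤ 320·8^{−k_i}; moreover there is a constant C_D, depending only on the doubling constant, such that each ball B(x_i, 16·8^{−k_i}) meets at most C_D of the balls B(x_j, 16·8^{−k_j}). -/

import Mathlib

open Metric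

/-- The distance between two subsets of a metric space. -/
noncomputable def setDist {M : Type*} [MetricSpace M] (s t : Set M) : ℝ :=
  sInf ((fun p : M × M => dist p.1 p.2) '' s ×ˢ t)

lemma sep_finset {M : Type*} [MetricSpace M] (N : ℕ)
    (hdoub : ∀ (x : M) (r : ℝ), ∃ t : Finset M, t.card ≤ N ∧
      ball x r ⊆ ⋃ y ∈ t, ball y (r / 2)) :
    ∀ m : ℕ, ∀ (x : M) (r : ℝ) (T : Set M), T ⊆ ball x r →
      (T.Pairwise fun a b => 2 * (r / 2 ^ m) ≤ dist a b) →
      ∃ F : Finset M, T ⊆ ↑F ∧ F.card ≤ N ^ m := by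
  classical
  intro m
  induction m with
  | zero =>
    intro x r T hTb hsep
    rcases T.eq_empty_or_nonempty with rfl | ⟨a, ha⟩
    · exact ⟨∅, by simp⟩
    refine ⟨{a}, ?_, by simp⟩
    intro b hb
    simp only [Finset.coe_singleton, Set.mem_singleton_iff]
    by_contra hne
    have h1 := hsep hb ha hne
    have h2 : dist b a < 2 * r := by
      have hb' := mem_ball.mp (hTb hb)
      have ha' := mem_ball.mp (hTb ha)
      calc dist b a ≤ dist b x + dist x a := dist_triangle _ _ _
        _ < r + r := by rw [dist_comm x a]; linarith
        _ = 2 * r := by ring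
    simp only [pow_zero, div_one] at h1
    linarith
  | succ m ih =>
    intro x r T hTb hsep
    obtain ⟨t, htc, htcov⟩ := hdoub x r
    have key : ∀ y ∈ t, ∃ F : Finset M, (T ∩ ball y (r / 2)) ⊆ ↑F ∧ F.card ≤ N ^ m := by
      intro y _
      refine ih y (r / 2) _ Set.inter_subset_right ?_
      refine (hsep.mono Set.inter_subset_left).imp ?_
      intro a b h
      calc 2 * (r / 2 / 2 ^ m) = 2 * (r / 2 ^ (m + 1)) := by ring
        _ ≤ dist a b := h
    choose F hF1 hF2 using key
    refine ⟨t.attach.biUnion (fun y => F y.1 y.2), ?_, ?_⟩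
    · intro a haT
      have := htcov (hTb haT)
      simp only [Set.mem_iUnion] at this
      obtain ⟨y, hy, hay⟩ := this
      simp only [Finset.coe_biUnion, Finset.mem_coe, Finset.mem_attach, Set.mem_iUnion,
        Set.iUnion_true]
      exact ⟨⟨y, hy⟩, hF1 y hy ⟨haT, hay⟩⟩
    · calc (t.attach.biUnion fun y => F y.1 y.2).card
          ≤ ∑ y ∈ t.attach, (F y.1 y.2).card := Finset.card_biUnion_le
        _ ≤ ∑ _y ∈ t.attach, N ^ m := Finset.sum_le_sum fun y _ => hF2 y.1 y.2
        _ = t.card * N ^ m := by rw [Finset.sum_const, Finset.card_attach, smul_eq_mul]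
        _ ≤ N * N ^ m := Nat.mul_le_mul_right _ htc
        _ = N ^ (m + 1) := by ring

lemma disjointify {M : Type*} [MeasurableSpace M] {ι : Type} [Countable ι]
    (S B : ι → Set M) (hSB : ∀ i, S i ⊆ B i)
    (hSm : ∀ i, MeasurableSet (S i)) (hBm : ∀ i, MeasurableSet (B i))
    (hSd : Pairwise (Function.onFun Disjoint S)) :
    ∃ U : ι → Set M, (∀ i, MeasurableSet (U i)) ∧
      Pairwise (Function.onFun Disjoint U) ∧ (⋃ i, U i) = ⋃ i, B i ∧
      ∀ i, S i ⊆ U i ∧ U i ⊆ B i := by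
  classical
  obtain ⟨f, hf⟩ := exists_injective_nat ι
  refine ⟨fun i => S i ∪ ((B i \ ⋃ j, S j) \ ⋃ (j) (_ : f j < f i), B j), ?_, ?_, ?_, ?_⟩
  · intro i
    exact (hSm i).union (((hBm i).diff (MeasurableSet.iUnion hSm)).diff
      (MeasurableSet.iUnion fun j => MeasurableSet.iUnion fun _ => hBm j))
  · have key : ∀ i j : ι, f i < f j →
        Disjoint (S i ∪ ((B i \ ⋃ j', S j') \ ⋃ (j') (_ : f j' < f i), B j'))
          (S j ∪ ((B j \ ⋃ j', S j') \ ⋃ (j') (_ : f j' < f j), B j')) := by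
      intro i j hij
      have hne : i ≠ j := fun h => by simp [h] at hij
      rw [Set.disjoint_left]
      rintro a (ha | ha) (hb | hb)
      · exact Set.disjoint_left.mp (hSd hne) ha hb
      · exact hb.1.2 (Set.mem_iUnion.mpr ⟨i, ha⟩)
      · exact ha.1.2 (Set.mem_iUnion.mpr ⟨j, hb⟩)
      · refine hb.2 ?_
        simp only [Set.mem_iUnion]
        exact ⟨i, hij, ha.1.1⟩
    intro i j hne
    rcases lt_or_gt_of_ne (hf.ne hne) with h | h
    · exact key i j h
    · exact (key j i h).symm
  · apply Set.Subset.antisymm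
    · refine Set.iUnion_subset fun i => Set.union_subset ?_ ?_
      · exact (hSB i).trans (Set.subset_iUnion B i)
      · exact (Set.diff_subset.trans Set.diff_subset).trans (Set.subset_iUnion B i)
    · intro z hz
      by_cases hzS : z ∈ ⋃ j, S j
      · obtain ⟨j, hj⟩ := Set.mem_iUnion.mp hzS
        exact Set.mem_iUnion.mpr ⟨j, Set.mem_union_left _ hj⟩
      · have hA : {n : ℕ | ∃ i, f i = n ∧ z ∈ B i}.Nonempty := by
          obtain ⟨i, hi⟩ := Set.mem_iUnion.mp hz
          exact ⟨f i, i, rfl, hi⟩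
        obtain ⟨i, hfi, hzi⟩ := Nat.sInf_mem hA
        refine Set.mem_iUnion.mpr ⟨i, Set.mem_union_right _ ⟨⟨hzi, hzS⟩, ?_⟩⟩
        simp only [Set.mem_iUnion, not_exists]
        intro j hj hzj
        have hm : f j ∈ {n : ℕ | ∃ i, f i = n ∧ z ∈ B i} := ⟨j, rfl, hzj⟩
        exact absurd (Nat.sInf_le hm) (not_le.mpr (hfi ▸ hj))
  · intro i
    exact ⟨Set.subset_union_left, Set.union_subset (hSB i)
      ((Set.diff_subset.trans Set.diff_subset))⟩

/-- Christ–Whitney decomposition of a nonempty proper open subset of a doubling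
metric space, with bounded overlap of the enlarged balls. -/
theorem stmt16 {M : Type*} [MetricSpace M] [MeasurableSpace M] [BorelSpace M]
    (N : ℕ) (hdoub : ∀ (x : M) (r : ℝ), ∃ t : Finset M, t.card ≤ N ∧
      ball x r ⊆ ⋃ y ∈ t, ball y (r / 2))
    (Ω : Set M) (hΩo : IsOpen Ω) (hΩne : Ω.Nonempty) (hΩne' : Ω ≠ Set.univ) :
    ∃ (ι : Type) (_ : Countable ι) (U : ι → Set M) (x : ι → M) (k : ι → ℤ),
      (∀ i, MeasurableSet (U i)) ∧
      Pairwise (Function.onFun Disjoint U) ∧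
      (⋃ i, U i) = Ω ∧
      (∀ i, x i ∈ U i) ∧
      (∀ i, ball (x i) ((8 : ℝ) ^ (-(k i)) / 16) ⊆ U i) ∧
      (∀ i, U i ⊆ ball (x i) (2 * (8 : ℝ) ^ (-(k i)))) ∧
      (∀ i, 32 * (8 : ℝ) ^ (-(k i)) ≤ setDist (U i) Ωᶜ ∧
            setDist (U i) Ωᶜ ≤ 320 * (8 : ℝ) ^ (-(k i))) ∧
      ∃ CD : ℕ, ∀ i,
        {j | (ball (x i) (16 * (8 : ℝ) ^ (-(k i))) ∩
              ball (x j) (16 * (8 : ℝ) ^ (-(k j)))).Nonempty}.Finite ∧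
        {j | (ball (x i) (16 * (8 : ℝ) ^ (-(k i))) ∩
              ball (x j) (16 * (8 : ℝ) ^ (-(k j)))).Nonempty}.ncard ≤ CD := by
  classical
  have h8 : (1:ℝ) < 8 := by norm_num
  have h8ne : (8:ℝ) ≠ 0 := by norm_num
  have hzpos : ∀ n : ℤ, (0:ℝ) < 8 ^ n := fun n => zpow_pos (by norm_num) n
  have hΩc : Ωᶜ.Nonempty := Set.nonempty_compl.mpr hΩne'
  obtain ⟨c0, hc0⟩ := hΩc
  set δ : M → ℝ := fun x => infDist x Ωᶜ with hδdef
  have hδpos : ∀ x ∈ Ω, 0 < δ x := by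
    intro x hx
    exact (hΩo.isClosed_compl.notMem_iff_infDist_pos ⟨c0, hc0⟩).mp (fun h => h hx)
  have hδub : ∀ x u : M, δ x ≤ δ u + dist x u := fun x u => infDist_le_infDist_add_dist
  have hmemΩ : ∀ u : M, 0 < δ u → u ∈ Ω := by
    intro u hu
    by_contra h
    rw [show δ u = 0 from infDist_zero_of_mem h] at hu
    exact lt_irrefl _ hu
  -- scale comparison helper
  have hscale : ∀ a b : ℤ, (8:ℝ) ^ (-a) / 64 < 8 ^ (-b) → (8:ℝ) ^ (-a) ≤ 8 * 8 ^ (-b) := by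
    intro a b h
    have he : (8:ℝ) ^ (-a - 2) = 8 ^ (-a) / 64 := by
      rw [zpow_sub₀ h8ne]
      norm_num
    have h2 : -a - 2 < -b := (zpow_lt_zpow_iff_right₀ h8).mp (he ▸ h)
    have h3 : -a ≤ -b + 1 := by omega
    calc (8:ℝ) ^ (-a) ≤ 8 ^ (-b + 1) := zpow_le_zpow_right₀ (by norm_num) h3
      _ = 8 * 8 ^ (-b) := by rw [zpow_add_one₀ h8ne]; ring
  -- the scale function
  have hkex : ∀ x ∈ Ω, ∃ n : ℤ, 40 * (8:ℝ) ^ (-n) < δ x ∧ δ x ≤ 320 * (8:ℝ) ^ (-n) := by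
    intro x hx
    obtain ⟨n, hn1, hn2⟩ :=
      exists_mem_Ioc_zpow (div_pos (hδpos x hx) (by norm_num : (0:ℝ) < 40)) h8
    refine ⟨-n, ?_, ?_⟩
    · rw [neg_neg]; linarith
    · rw [neg_neg]
      have h2 : δ x / 40 ≤ (8:ℝ) ^ (n + 1) := hn2
      rw [zpow_add_one₀ h8ne] at h2
      linarith
  set K : M → ℤ := fun x => if h : x ∈ Ω then (hkex x h).choose else 0 with hKdef
  have hK1 : ∀ x ∈ Ω, 40 * (8:ℝ) ^ (-(K x)) < δ x := by
    intro x hx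
    simp only [hKdef, dif_pos hx]
    exact (hkex x hx).choose_spec.1
  have hK2 : ∀ x ∈ Ω, δ x ≤ 320 * (8:ℝ) ^ (-(K x)) := by
    intro x hx
    simp only [hKdef, dif_pos hx]
    exact (hkex x hx).choose_spec.2
  -- Zorn: maximal separated set
  set P : Set (Set M) := {X | X ⊆ Ω ∧
    X.Pairwise fun a b => max ((8:ℝ) ^ (-(K a))) ((8:ℝ) ^ (-(K b))) / 4 ≤ dist a b} with hPdef
  have hchain : ∀ c ⊆ P, IsChain (· ⊆ ·) c → c.Nonempty →
      ∃ ub ∈ P, ∀ s ∈ c, s ⊆ ub := by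
    intro c hcP hch _
    refine ⟨⋃₀ c, ⟨?_, ?_⟩, fun s hs => Set.subset_sUnion_of_mem hs⟩
    · exact Set.sUnion_subset fun s hs => (hcP hs).1
    · rintro a ⟨s1, hs1, ha⟩ b ⟨s2, hs2, hb⟩ hne
      rcases hch.total hs1 hs2 with h | h
      · exact (hcP hs2).2 (h ha) hb hne
      · exact (hcP hs1).2 ha (h hb) hne
  obtain ⟨X, -, hXmax⟩ := zorn_subset_nonempty P hchain ∅
    ⟨Set.empty_subset _, Set.pairwise_empty _⟩
  have hXP : X ∈ P := hXmax.prop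
  have hXΩ : X ⊆ Ω := hXP.1
  have hXsep := hXP.2
  have hsymm : Symmetric fun a b : M =>
      max ((8:ℝ) ^ (-(K a))) ((8:ℝ) ^ (-(K b))) / 4 ≤ dist a b := by
    intro a b h
    rwa [max_comm, dist_comm]
  -- coverage
  have hcov : ∀ z ∈ Ω, ∃ p ∈ X, dist z p < 2 * (8:ℝ) ^ (-(K p)) := by
    intro z hz
    by_cases hzX : z ∈ X
    · exact ⟨z, hzX, by simpa using mul_pos (by norm_num : (0:ℝ) < 2) (hzpos (-(K z)))⟩
    have hnotP : insert z X ∉ P := by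
      intro hmem
      exact hzX (hXmax.2 hmem (Set.subset_insert z X) (Set.mem_insert z X))
    have hfail : ¬ (insert z X).Pairwise fun a b =>
        max ((8:ℝ) ^ (-(K a))) ((8:ℝ) ^ (-(K b))) / 4 ≤ dist a b := by
      intro hp
      exact hnotP ⟨Set.insert_subset hz hXΩ, hp⟩
    haveI : Std.Symm fun a b : M =>
        max ((8:ℝ) ^ (-(K a))) ((8:ℝ) ^ (-(K b))) / 4 ≤ dist a b := ⟨fun _ _ h => hsymm h⟩
    rw [Set.pairwise_insert_of_symm] at hfail
    push_neg at hfail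
    obtain ⟨p, hpX, hpne, hplt⟩ := hfail hXsep
    rcases le_or_gt ((8:ℝ) ^ (-(K z))) ((8:ℝ) ^ (-(K p))) with hle | hlt
    · refine ⟨p, hpX, ?_⟩
      have : max ((8:ℝ) ^ (-(K z))) ((8:ℝ) ^ (-(K p))) = (8:ℝ) ^ (-(K p)) :=
        max_eq_right hle
      rw [this] at hplt
      have := hzpos (-(K p))
      linarith
    · refine ⟨p, hpX, ?_⟩
      have hmax : max ((8:ℝ) ^ (-(K z))) ((8:ℝ) ^ (-(K p))) = (8:ℝ) ^ (-(K z)) :=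
        max_eq_left hlt.le
      rw [hmax] at hplt
      -- dist z p < 8^(-K z)/4 ; show scales comparable
      have hpΩ : p ∈ Ω := hXΩ hpX
      have hδp : δ z ≤ δ p + dist z p := hδub z p
      have h1 : 40 * (8:ℝ) ^ (-(K z)) < δ z := hK1 z hz
      have h2 : δ p ≤ 320 * (8:ℝ) ^ (-(K p)) := hK2 p hpΩ
      have hdzp : dist z p < (8:ℝ) ^ (-(K z)) / 4 := hplt
      have hrz := hzpos (-(K z))
      have h64 : (8:ℝ) ^ (-(K z)) / 64 < 8 ^ (-(K p)) := by nlinarith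
      have h8le : (8:ℝ) ^ (-(K z)) ≤ 8 * 8 ^ (-(K p)) := hscale _ _ h64
      linarith
  -- countability of X
  have hXcnt : X.Countable := by
    have hsub : X ⊆ ⋃ (kk : ℤ) (n : ℕ),
        {y | y ∈ X ∧ K y = kk ∧ y ∈ ball c0 n} := by
      intro y hy
      obtain ⟨n, hn⟩ := exists_nat_gt (dist y c0)
      simp only [Set.mem_iUnion]
      exact ⟨K y, n, hy, rfl, mem_ball.mpr hn⟩
    refine Set.Countable.mono hsub ?_
    refine Set.countable_iUnion fun kk => Set.countable_iUnion fun n => ?_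
    -- each piece is finite
    obtain ⟨m, hm⟩ := pow_unbounded_of_one_lt
      (8 * (n:ℝ) / (8:ℝ) ^ (-kk)) (by norm_num : (1:ℝ) < 2)
    have hq := hzpos (-kk)
    have h2m : (0:ℝ) < 2 ^ m := by positivity
    have hsep' : ({y | y ∈ X ∧ K y = kk ∧ y ∈ ball c0 n} : Set M).Pairwise
        fun a b => 2 * ((n:ℝ) / 2 ^ m) ≤ dist a b := by
      rintro a ⟨haX, haK, -⟩ b ⟨hbX, hbK, -⟩ hne
      have hsp : max ((8:ℝ) ^ (-(K a))) ((8:ℝ) ^ (-(K b))) / 4 ≤ dist a b :=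
        hXsep haX hbX hne
      rw [haK, hbK, max_self] at hsp
      have hm' : 8 * (n:ℝ) < 2 ^ m * (8:ℝ) ^ (-kk) := by
        rw [div_lt_iff₀ hq] at hm
        linarith
      have h8A : 8 * ((n:ℝ) / 2 ^ m) < (8:ℝ) ^ (-kk) := by
        rw [← mul_div_assoc, div_lt_iff₀ h2m]
        linarith
      linarith
    obtain ⟨F, hF1, -⟩ := sep_finset N hdoub m c0 n _
      (fun y hy => hy.2.2) hsep'
    exact (F.finite_toSet.subset hF1).countable
  -- set up the index type (in Type 0)
  haveI := hXcnt.to_subtype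
  obtain ⟨g, hg⟩ := exists_injective_nat ↥X
  let e : ↥X ≃ Set.range g := Equiv.ofInjective g hg
  set ι : Type := ↥(Set.range g) with hιdef
  let q : ι → M := fun a => ↑(e.symm a)
  have hqinj : Function.Injective q := Subtype.coe_injective.comp e.symm.injective
  have hqX : ∀ a : ι, q a ∈ X := fun a => (e.symm a).2
  have hqΩ : ∀ a : ι, q a ∈ Ω := fun a => hXΩ (hqX a)
  have hqsurj : ∀ p : ↥X, ∃ a : ι, q a = (p : M) := fun p =>
    ⟨e p, by show ((e.symm (e p) : ↥X) : M) = ↑p; rw [Equiv.symm_apply_apply]⟩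
  have hsep : ∀ a b : ι, a ≠ b →
      max ((8:ℝ) ^ (-(K (q a)))) ((8:ℝ) ^ (-(K (q b)))) / 4 ≤ dist (q a) (q b) :=
    fun a b h => hXsep (hqX a) (hqX b) (hqinj.ne h)
  -- small and big balls
  set Sb : ι → Set M := fun a => ball (q a) ((8:ℝ) ^ (-(K (q a))) / 16) with hSbdef
  set Bb : ι → Set M := fun a => ball (q a) (2 * (8:ℝ) ^ (-(K (q a)))) with hBbdef
  have hSB : ∀ a, Sb a ⊆ Bb a := by
    intro a
    apply ball_subset_ball
    have := hzpos (-(K (q a)))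
    linarith
  have hSd : Pairwise (Function.onFun Disjoint Sb) := by
    intro a b hne
    have hs := hsep a b hne
    have h1 := le_max_left ((8:ℝ) ^ (-(K (q a)))) ((8:ℝ) ^ (-(K (q b))))
    have h2 := le_max_right ((8:ℝ) ^ (-(K (q a)))) ((8:ℝ) ^ (-(K (q b))))
    have h3 := hzpos (-(K (q a)))
    have h4 := hzpos (-(K (q b)))
    exact ball_disjoint_ball (by linarith)
  have hBΩ : ∀ a, Bb a ⊆ Ω := by
    intro a u hu
    have hd : dist (q a) u < 2 * (8:ℝ) ^ (-(K (q a))) := by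
      rw [dist_comm]; exact mem_ball.mp hu
    have h1 := hK1 (q a) (hqΩ a)
    have h2 := hδub (q a) u
    have := hzpos (-(K (q a)))
    exact hmemΩ u (by linarith)
  have hBU : (⋃ a, Bb a) = Ω := by
    apply Set.Subset.antisymm (Set.iUnion_subset hBΩ)
    intro z hz
    obtain ⟨p, hpX, hp⟩ := hcov z hz
    obtain ⟨a, ha⟩ := hqsurj ⟨p, hpX⟩
    refine Set.mem_iUnion.mpr ⟨a, ?_⟩
    simp only [hBbdef, mem_ball]
    rw [ha]
    exact hp
  obtain ⟨U, hUm, hUd, hUB, hUsb⟩ := disjointify Sb Bb hSB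
    (fun a => measurableSet_ball) (fun a => measurableSet_ball) hSd
  refine ⟨ι, inferInstance, U, q, fun a => K (q a), hUm, hUd, by rw [hUB, hBU], ?_, ?_, ?_, ?_, ?_⟩
  · intro a
    exact (hUsb a).1 (mem_ball_self (by positivity))
  · intro a
    exact (hUsb a).1
  · intro a
    exact (hUsb a).2
  · -- setDist bounds
    intro a
    have hq1 := hK1 (q a) (hqΩ a)
    have hq2 := hK2 (q a) (hqΩ a)
    have hrpos := hzpos (-(K (q a)))
    have hxU : q a ∈ U a := (hUsb a).1 (mem_ball_self (by positivity))
    have hBdd : BddBelow ((fun p : M × M => dist p.1 p.2) '' (U a) ×ˢ Ωᶜ) := by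
      refine ⟨0, ?_⟩
      rintro y ⟨p, -, rfl⟩
      exact dist_nonneg
    constructor
    · refine le_csInf ⟨dist (q a) c0, ⟨(q a, c0), ⟨hxU, hc0⟩, rfl⟩⟩ ?_
      rintro y ⟨⟨u, c⟩, hp, rfl⟩
      obtain ⟨hu, hc⟩ := Set.mem_prod.mp hp
      have h1 : infDist u Ωᶜ ≤ dist u c := infDist_le_dist_of_mem hc
      have h2 : δ (q a) ≤ δ u + dist (q a) u := hδub _ _
      have h3 : dist (q a) u < 2 * (8:ℝ) ^ (-(K (q a))) := by
        rw [dist_comm]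
        exact mem_ball.mp ((hUsb a).2 hu)
      simp only [hδdef] at h1 h2 ⊢
      linarith
    · by_contra hcon
      push_neg at hcon
      have hlt : infDist (q a) Ωᶜ <
          sInf ((fun p : M × M => dist p.1 p.2) '' (U a) ×ˢ Ωᶜ) :=
        lt_of_le_of_lt hq2 hcon
      obtain ⟨c, hc, hdc⟩ := (infDist_lt_iff ⟨c0, hc0⟩).mp hlt
      have hle : sInf ((fun p : M × M => dist p.1 p.2) '' (U a) ×ˢ Ωᶜ) ≤
          dist (q a) c := csInf_le hBdd ⟨(q a, c), ⟨hxU, hc⟩, rfl⟩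
      rw [setDist] at hcon
      linarith
  · -- bounded overlap
    refine ⟨N ^ 14, fun a => ?_⟩
    set J : Set ι := {b | (ball (q a) (16 * (8:ℝ) ^ (-(K (q a)))) ∩
        ball (q b) (16 * (8:ℝ) ^ (-(K (q b))))).Nonempty} with hJdef
    have hra := hzpos (-(K (q a)))
    have hdJ : ∀ b ∈ J, dist (q a) (q b) <
        16 * ((8:ℝ) ^ (-(K (q a))) + (8:ℝ) ^ (-(K (q b)))) := by
      rintro b ⟨y, hy1, hy2⟩
      have h1 := mem_ball.mp hy1
      have h2 := mem_ball.mp hy2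
      calc dist (q a) (q b) ≤ dist (q a) y + dist y (q b) := dist_triangle _ _ _
        _ < 16 * (8:ℝ) ^ (-(K (q a))) + 16 * (8:ℝ) ^ (-(K (q b))) := by
            have h1' : dist (q a) y < 16 * (8:ℝ) ^ (-(K (q a))) := by
              rw [dist_comm]; exact h1
            linarith
        _ = 16 * ((8:ℝ) ^ (-(K (q a))) + (8:ℝ) ^ (-(K (q b)))) := by ring
    have hcmp : ∀ b ∈ J, (8:ℝ) ^ (-(K (q b))) ≤ 8 * (8:ℝ) ^ (-(K (q a))) ∧
        (8:ℝ) ^ (-(K (q a))) ≤ 8 * (8:ℝ) ^ (-(K (q b))) := by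
      intro b hb
      have hd := hdJ b hb
      have hrb := hzpos (-(K (q b)))
      have ha1 := hK1 (q a) (hqΩ a)
      have ha2 := hK2 (q a) (hqΩ a)
      have hb1 := hK1 (q b) (hqΩ b)
      have hb2 := hK2 (q b) (hqΩ b)
      have hab : δ (q a) ≤ δ (q b) + dist (q a) (q b) := hδub _ _
      have hba : δ (q b) ≤ δ (q a) + dist (q a) (q b) := by
        rw [dist_comm] at *
        exact hδub _ _
      constructor
      · refine hscale _ _ ?_
        nlinarith
      · refine hscale _ _ ?_
        nlinarith
    set T : Set M := q '' J with hTdef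
    have hTb : T ⊆ ball (q a) (145 * (8:ℝ) ^ (-(K (q a)))) := by
      rintro _ ⟨b, hb, rfl⟩
      have hd := hdJ b hb
      have := (hcmp b hb).1
      rw [mem_ball, dist_comm]
      linarith
    have hTsep : T.Pairwise fun u v =>
        2 * (145 * (8:ℝ) ^ (-(K (q a))) / 2 ^ 14) ≤ dist u v := by
      rintro _ ⟨b, hb, rfl⟩ _ ⟨b', hb', rfl⟩ hne
      have hbb : b ≠ b' := fun h => hne (by rw [h])
      have hs := hsep b b' hbb
      have h1 := (hcmp b hb).2
      have h2 := (hcmp b' hb').2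
      have hmax : (8:ℝ) ^ (-(K (q a))) / 8 ≤
          max ((8:ℝ) ^ (-(K (q b)))) ((8:ℝ) ^ (-(K (q b')))) := by
        have := le_max_left ((8:ℝ) ^ (-(K (q b)))) ((8:ℝ) ^ (-(K (q b'))))
        linarith
      have h2pow : (2:ℝ) ^ (14:ℕ) = 16384 := by norm_num
      rw [h2pow]
      have hle := le_trans (by linarith : (8:ℝ) ^ (-(K (q a))) / 32 ≤
        max ((8:ℝ) ^ (-(K (q b)))) ((8:ℝ) ^ (-(K (q b')))) / 4) hs
      linarith
    obtain ⟨F, hF1, hF2⟩ := sep_finset N hdoub 14 (q a)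
      (145 * (8:ℝ) ^ (-(K (q a)))) T hTb hTsep
    have hTfin : T.Finite := F.finite_toSet.subset hF1
    have hJfin : J.Finite :=
      Set.Finite.of_finite_image hTfin (Set.injOn_of_injective hqinj)
    refine ⟨hJfin, ?_⟩
    have hcard : J.ncard = T.ncard := (Set.ncard_image_of_injective J hqinj).symm
    rw [hcard]
    calc T.ncard ≤ (↑F : Set M).ncard := Set.ncard_le_ncard hF1 F.finite_toSet
      _ = F.card := Set.ncard_coe_finset F
      _ ≤ N ^ 14 := hF2
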